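/- arXiv:1203.6859 — 2 statements merged into one kernel-verified Lean document; each statement's English description precedes it below -/
import Mathlib

section
/- If A1 is self-framing and A1 * A2 semantically entails A3, then A1 semantically entails A2 -* A3. -/
/-- Values: object identifiers, integers, or null. -/
inductive Val : Type
  | obj : ℕ → Val
  | intv : ℤ → Val
  | null : Val

/-- A total heap maps (object-id, field-id) pairs to values. -/
abbrev Heap : Type := Val → ℕ → Val

/-- A permission mask maps (object-id, field-id) pairs to (nonnegative rational) permissions. -/
abbrev Mask : Type := Val → ℕ → NNRat

/-- Environments give values to variables. -/
abbrev Env : Type := ℕ → Val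

/-- A field location: pair of an object identifier and a field identifier. -/
abbrev Loc : Type := Val × ℕ

/-- Compatibility of two permission masks: pointwise sums stay at most 1. -/
def Mask.compat (P₁ P₂ : Mask) : Prop := ∀ o f, P₁ o f + P₂ o f ≤ 1

/-- The set of readable locations of a mask: those with positive permission. -/
def Mask.rds (P : Mask) : Set Loc := {l | 0 < P l.1 l.2}

/-- Two heaps agree on a set of locations. -/
def Heap.agrees (F : Set Loc) (H₁ H₂ : Heap) : Prop :=
  ∀ l : Loc, l ∈ F → H₁ l.1 l.2 = H₂ l.1 l.2

/-- TPL expressions (possibly heap-dependent). -/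
inductive Expr : Type
  | var : ℕ → Expr
  | null : Expr
  | intc : ℤ → Expr
  | fld : Expr → ℕ → Expr

/-- Expression evaluation in an environment and total heap. -/
def Expr.eval (σ : Env) (H : Heap) : Expr → Val
  | .var x => σ x
  | .null => Val.null
  | .intc n => Val.intv n
  | .fld E f => H (E.eval σ H) f

/-- TPL assertions. -/
inductive Assertion : Type
  | eq : Expr → Expr → Assertion
  | pointsTo : Expr → ℕ → NNRat → Expr → Assertion
  | acc : Expr → ℕ → NNRat → Assertion
  | sep : Assertion → Assertion → Assertion
  | wand : Assertion → Assertion → Assertion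
  | conj : Assertion → Assertion → Assertion
  | disj : Assertion → Assertion → Assertion
  | impl : Assertion → Assertion → Assertion
  | exis : ℕ → Assertion → Assertion

/-- Minimal permission extension: `MinExt S H P P'` says `P'` is a minimal permission
extension of the state with heap `H`, mask `P` to satisfy the predicate `S`. -/
def MinExt (S : Heap → Mask → Prop) (H : Heap) (P P' : Mask) : Prop :=
  S H (P + P') ∧
    ∀ P'' : Mask, P'' ≤ P' → Mask.rds P'' ⊂ Mask.rds P' → ¬ S H (P + P'')

/-- Environment update. -/
def Env.upd (σ : Env) (x : ℕ) (v : Val) : Env := fun y => if y = x then v else σ y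

/-- Total heap semantics for TPL assertions. -/
def sat : Heap → Mask → Env → Assertion → Prop
  | H, P, σ, .eq E E' => E.eval σ H = E'.eval σ H
  | H, P, σ, .pointsTo E f π E' =>
      π ≤ P (E.eval σ H) f ∧ H (E.eval σ H) f = E'.eval σ H
  | H, P, σ, .acc E f π => π ≤ P (E.eval σ H) f
  | H, P, σ, .sep A₁ A₂ =>
      ∃ P₁ P₂ : Mask, Mask.compat P₁ P₂ ∧ P = P₁ + P₂ ∧
        sat H P₁ σ A₁ ∧ sat H P₂ σ A₂
  | H, P, σ, .wand A₁ A₂ =>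
      ∀ (P' : Mask) (H' : Heap), Mask.compat P' P →
        Heap.agrees (Mask.rds P ∪ (Mask.rds P')ᶜ) H H' →
        MinExt (fun h p => sat h p σ A₁) H' 0 P' →
        sat H' (P + P') σ A₂
  | H, P, σ, .conj A₁ A₂ => sat H P σ A₁ ∧ sat H P σ A₂
  | H, P, σ, .disj A₁ A₂ => sat H P σ A₁ ∨ sat H P σ A₂
  | H, P, σ, .impl A₁ A₂ =>
      ∀ (P' : Mask) (H' : Heap), Mask.compat P' P →
        Heap.agrees (Mask.rds P ∪ (Mask.rds P')ᶜ) H H' →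
        MinExt (fun h p => sat h p σ A₁) H' P P' →
        sat H' (P + P') σ A₂
  | H, P, σ, .exis x A => ∃ v : Val, sat H P (σ.upd x v) A

/-- A formula is weakenable iff its truth is closed under permission extension. -/
def Weakenable (A : Assertion) : Prop :=
  ∀ (H : Heap) (P P' : Mask) (σ : Env), P ≤ P' → sat H P σ A → sat H P' σ A

/-- A formula is pure iff it doesn't depend on permissions. -/
def IsPure (A : Assertion) : Prop :=
  ∀ (H : Heap) (P : Mask) (σ : Env), sat H P σ A → sat H 0 σ A

/-- A formula is self-framing iff its truth is robust to interference on
locations without permission. -/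
def SelfFraming (A : Assertion) : Prop :=
  ∀ (H H' : Heap) (P : Mask) (σ : Env),
    sat H P σ A → Heap.agrees (Mask.rds P) H H' → sat H' P σ A

/-- A formula is supported iff satisfaction is closed under pointwise min of masks. -/
def Supported (A : Assertion) : Prop :=
  ∀ (H : Heap) (σ : Env) (P₁ P₂ : Mask),
    sat H P₁ σ A → sat H P₂ σ A → sat H (P₁ ⊓ P₂) σ A

/-- Semantic entailment. -/
def Entails (A B : Assertion) : Prop :=
  ∀ (H : Heap) (P : Mask) (σ : Env), sat H P σ A → sat H P σ B

/-- Semantic equivalence. -/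
def AEquiv (A B : Assertion) : Prop := Entails A B ∧ Entails B A

/-- If `A₁` is self-framing and `A₁ * A₂` semantically entails `A₃`, then `A₁`
semantically entails `A₂ -* A₃`. -/
theorem entails_wand_of_sep (A₁ A₂ A₃ : Assertion)
    (hsf : SelfFraming A₁) (h : Entails (A₁.sep A₂) A₃) :
    Entails A₁ (A₂.wand A₃) := by
  intro H P σ h1
  intro P' H' hcompat hagr hmin
  apply h
  refine ⟨P, P', ?_, rfl, ?_, ?_⟩
  · intro o f; rw [add_comm]; exact hcompat o f
  · exact hsf H H' P σ h1 (fun l hl => hagr l (Or.inl hl))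
  · have := hmin.1
    simpa using this
end

section
/- Composition of minimal extensions for supported assertions: if ext(H, ∅, σ, P1, A1), ext(H, ∅, σ, P2, A2), P1 ⊥ P2, and A1 and A2 are supported, then ext(H, ∅, σ, P1 * P2, A1 * A2). -/
lemma rds_add (P Q : Mask) : Mask.rds (P + Q) = Mask.rds P ∪ Mask.rds Q := by
  ext l
  simp [Mask.rds, pos_iff_ne_zero, Pi.add_apply, or_iff_not_and_not]

lemma rds_inf (P Q : Mask) : Mask.rds (P ⊓ Q) = Mask.rds P ∩ Mask.rds Q := by
  ext l
  simp [Mask.rds, lt_min_iff, Set.mem_inter_iff]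

/-- Composition of minimal extensions for supported assertions: combining
compatible minimal permission extensions for supported `A₁` and `A₂` yields a
minimal permission extension for `A₁ * A₂`. -/
theorem minExt_sep_compose (A₁ A₂ : Assertion) (H : Heap) (P₁ P₂ : Mask) (σ : Env)
    (hs₁ : Supported A₁) (hs₂ : Supported A₂) (hc : Mask.compat P₁ P₂)
    (h₁ : MinExt (fun h p => sat h p σ A₁) H 0 P₁)
    (h₂ : MinExt (fun h p => sat h p σ A₂) H 0 P₂) :
    MinExt (fun h p => sat h p σ (A₁.sep A₂)) H 0 (P₁ + P₂) := by
  have sat1 : sat H P₁ σ A₁ := by have := h₁.1; rwa [zero_add] at this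
  have sat2 : sat H P₂ σ A₂ := by have := h₂.1; rwa [zero_add] at this
  constructor
  · show sat H (0 + (P₁ + P₂)) σ (A₁.sep A₂)
    rw [zero_add]
    exact ⟨P₁, P₂, hc, rfl, sat1, sat2⟩
  · intro P'' hle hss hsat
    rw [zero_add] at hsat
    obtain ⟨Q₁, Q₂, hcq, heq, s1, s2⟩ := hsat
    have key : ∀ (Q P : Mask) (A : Assertion), Supported A →
        MinExt (fun h p => sat h p σ A) H 0 P → sat H P σ A → sat H Q σ A →
        Mask.rds P ⊆ Mask.rds Q := by
      intro Q P A hs hmin satP satQ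
      have satInf : sat H (Q ⊓ P) σ A := hs H σ Q P satQ satP
      have hsub : Mask.rds (Q ⊓ P) ⊆ Mask.rds P := by
        rw [rds_inf]; exact Set.inter_subset_right
      by_contra hns
      refine hmin.2 (Q ⊓ P) inf_le_right ⟨hsub, ?_⟩ (by rwa [zero_add])
      intro h
      rw [rds_inf] at h
      exact hns (h.trans Set.inter_subset_left)
    have k1 : Mask.rds P₁ ⊆ Mask.rds Q₁ := key Q₁ P₁ A₁ hs₁ h₁ sat1 s1
    have k2 : Mask.rds P₂ ⊆ Mask.rds Q₂ := key Q₂ P₂ A₂ hs₂ h₂ sat2 s2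
    apply hss.2
    rw [heq, rds_add, rds_add]
    exact Set.union_subset_union k1 k2
end
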